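/- Let a < 0, k > 0, x₁, x₂ ∈ ℝ. With μ₁, μ̂₁, Σ₁₁, Σ̂₁ as in the coupled identical-oscillator model and its reduction, there exists C > 0 (depending on a, x₁, x₂ but not on t or k, for k in a bounded set) such that for all t ≥ 0, (μ₁(t) − μ̂₁(t))² + (sqrt(Σ₁₁(t)) − sqrt(Σ̂₁(t)))² ≤ C·k. -/

import Mathlib

/-- For `a < 0` and `t ≥ 0`, we have `-a * (t * exp (a*t)) ≤ 1`. -/
lemma aux_texp {a t : ℝ} (ha : a < 0) (ht : 0 ≤ t) :
    -a * (t * Real.exp (a*t)) ≤ 1 := by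
  have h1 : -a*t ≤ Real.exp (-(a*t)) := by
    nlinarith [Real.add_one_le_exp (-(a*t))]
  have h2 : (-a*t) * Real.exp (a*t) ≤ Real.exp (-(a*t)) * Real.exp (a*t) :=
    mul_le_mul_of_nonneg_right h1 (Real.exp_pos _).le
  have h3 : Real.exp (-(a*t)) * Real.exp (a*t) = 1 := by
    rw [← Real.exp_add]; simp
  nlinarith [h2, h3]

lemma aux_one_sub_exp {s : ℝ} : 1 - Real.exp (-s) ≤ s := by
  nlinarith [Real.add_one_le_exp (-s)]

lemma aux_sq_sqrt_sub {x y : ℝ} (hy : 0 ≤ y) (hxy : y ≤ x) :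
    (Real.sqrt x - Real.sqrt y)^2 ≤ x - y := by
  have hx : 0 ≤ x := le_trans hy hxy
  nlinarith [mul_nonneg (sub_nonneg.2 (Real.sqrt_le_sqrt hxy)) (Real.sqrt_nonneg y),
    Real.sq_sqrt hx, Real.sq_sqrt hy, Real.sqrt_nonneg x, Real.sqrt_nonneg y]

set_option maxHeartbeats 1600000 in
theorem coupled_wasserstein_small_coupling (a x₁ x₂ K : ℝ) (ha : a < 0) (hK : K > 0) :
    ∃ C > 0, ∀ k : ℝ, 0 < k → k ≤ K →
      let μ₁ : ℝ → ℝ := fun t =>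
        (1/2)*((Real.exp ((a - 2*k)*t) + Real.exp (a*t))*x₁
          + (Real.exp (a*t) - Real.exp ((a - 2*k)*t))*x₂)
      let μhat : ℝ → ℝ := fun t => Real.exp (a*t)*x₁
      let S11 : ℝ → ℝ := fun t =>
        (1/2)*((Real.exp (2*(a - 2*k)*t) - 1)/(a - 2*k) + (Real.exp (2*a*t) - 1)/a)
      let Shat : ℝ → ℝ := fun t => -(1/2)*(1/(a - 2*k) + 1/a)*(1 - Real.exp (2*a*t))
      ∀ t : ℝ, t ≥ 0 →
        (μ₁ t - μhat t)^2 + (Real.sqrt (S11 t) - Real.sqrt (Shat t))^2 ≤ C*k := by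
  have ha2 : (0:ℝ) < a^2 := by nlinarith
  refine ⟨(K*(x₁-x₂)^2 + 1)/a^2, div_pos (by nlinarith [sq_nonneg (x₁-x₂)]) ha2, ?_⟩
  intro k hk hkK
  dsimp only
  intro t ht
  have hb : a - 2*k < 0 := by linarith
  have hane : a ≠ 0 := ne_of_lt ha
  have hbne : a - 2*k ≠ 0 := ne_of_lt hb
  set E : ℝ := Real.exp (a*t) with hE_def
  set Eb : ℝ := Real.exp ((a - 2*k)*t) with hEb_def
  set E2 : ℝ := Real.exp (2*a*t) with hE2_def
  set Eb2 : ℝ := Real.exp (2*(a - 2*k)*t) with hEb2_def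
  have hE : 0 < E := Real.exp_pos _
  have hE2 : 0 < E2 := Real.exp_pos _
  have hEble : Eb ≤ E := Real.exp_le_exp.mpr (by nlinarith)
  have hEb2le : Eb2 ≤ E2 := Real.exp_le_exp.mpr (by nlinarith)
  have hEle1 : E ≤ 1 := by
    rw [hE_def, ← Real.exp_zero]; exact Real.exp_le_exp.mpr (by nlinarith)
  have hE2le1 : E2 ≤ 1 := by
    rw [hE2_def, ← Real.exp_zero]; exact Real.exp_le_exp.mpr (by nlinarith)
  have hEb2le1 : Eb2 ≤ 1 := le_trans hEb2le hE2le1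
  -- factorizations
  have hEbfac : Eb = E * Real.exp (-(2*k*t)) := by
    rw [hE_def, hEb_def, ← Real.exp_add]; ring_nf
  have hEb2fac : Eb2 = E2 * Real.exp (-(4*k*t)) := by
    rw [hE2_def, hEb2_def, ← Real.exp_add]; ring_nf
  -- bound on E - Eb
  have h1 : 1 - Real.exp (-(2*k*t)) ≤ 2*k*t := aux_one_sub_exp
  have h0 : 0 ≤ 1 - Real.exp (-(2*k*t)) := by
    have : Real.exp (-(2*k*t)) ≤ 1 := by
      rw [← Real.exp_zero]; exact Real.exp_le_exp.mpr (by nlinarith)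
    linarith
  have s2 : -a * (t * E) ≤ 1 := aux_texp ha ht
  have hd2 : (E - Eb) * (-a) ≤ 2*k := by
    have hd : E - Eb = E * (1 - Real.exp (-(2*k*t))) := by rw [hEbfac]; ring
    have s3 : (-a) * (E * (1 - Real.exp (-(2*k*t)))) ≤ (-a) * (E * (2*k*t)) :=
      mul_le_mul_of_nonneg_left (mul_le_mul_of_nonneg_left h1 hE.le) (by linarith)
    have s4 : (2*k) * (-a * (t*E)) ≤ (2*k) * 1 :=
      mul_le_mul_of_nonneg_left s2 (by linarith)
    rw [hd]; nlinarith [s3, s4]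
  -- bound on E2 - Eb2
  have h1' : 1 - Real.exp (-(4*k*t)) ≤ 4*k*t := aux_one_sub_exp
  have h0' : 0 ≤ 1 - Real.exp (-(4*k*t)) := by
    have : Real.exp (-(4*k*t)) ≤ 1 := by
      rw [← Real.exp_zero]; exact Real.exp_le_exp.mpr (by nlinarith)
    linarith
  have s2' : -(2*a) * (t * E2) ≤ 1 := by
    have := aux_texp (a := 2*a) (t := t) (by linarith) ht
    rw [hE2_def]; nlinarith [this]
  have hd2' : (E2 - Eb2) * a^2 ≤ k*(2*(2*k - a)) := by
    have hd' : E2 - Eb2 = E2 * (1 - Real.exp (-(4*k*t))) := by rw [hEb2fac]; ring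
    have s3' : E2 * (1 - Real.exp (-(4*k*t))) * a^2 ≤ E2 * (4*k*t) * a^2 :=
      mul_le_mul_of_nonneg_right (mul_le_mul_of_nonneg_left h1' hE2.le) (sq_nonneg a)
    have s4' : (2*k*(-a)) * (-(2*a) * (t*E2)) ≤ (2*k*(-a)) * 1 :=
      mul_le_mul_of_nonneg_left s2' (by nlinarith)
    rw [hd']; linarith [s3', s4', sq_nonneg k]
  -- first term
  have T1 : ((1/2)*((Eb + E)*x₁ + (E - Eb)*x₂) - E*x₁)^2 * a^2 ≤ K*(x₁-x₂)^2*k := by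
    have hm : (1/2)*((Eb + E)*x₁ + (E - Eb)*x₂) - E*x₁ = (Eb - E)*(x₁-x₂)/2 := by ring
    rw [hm]
    have hnn : 0 ≤ (E - Eb) * (-a) := mul_nonneg (by linarith) (by linarith)
    have hsq : ((E - Eb)*(-a))^2 ≤ (2*k)^2 := by nlinarith [hd2, hnn]
    have h5 : ((E - Eb)*(-a))^2*(x₁-x₂)^2 ≤ (2*k)^2*(x₁-x₂)^2 :=
      mul_le_mul_of_nonneg_right hsq (sq_nonneg _)
    nlinarith [h5,
      mul_nonneg (mul_nonneg (sub_nonneg.2 hkK) hk.le) (sq_nonneg (x₁-x₂))]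
  -- second term
  have hS11 : 0 ≤ (1/2)*((Eb2 - 1)/(a - 2*k) + (E2 - 1)/a) := by
    have e1 : 0 ≤ (Eb2 - 1)/(a - 2*k) :=
      div_nonneg_iff.mpr (Or.inr ⟨by linarith, by linarith⟩)
    have e2 : 0 ≤ (E2 - 1)/a :=
      div_nonneg_iff.mpr (Or.inr ⟨by linarith, by linarith⟩)
    linarith
  have hShat : 0 ≤ -(1/2)*(1/(a - 2*k) + 1/a)*(1 - E2) := by
    have i1 : 1/(a - 2*k) < 0 := one_div_neg.mpr hb
    have i2 : 1/a < 0 := one_div_neg.mpr ha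
    nlinarith [mul_nonneg (by linarith : (0:ℝ) ≤ -(1/(a - 2*k) + 1/a))
      (by linarith : (0:ℝ) ≤ 1 - E2)]
  have hS : (1/2)*((Eb2 - 1)/(a - 2*k) + (E2 - 1)/a)
      - (-(1/2)*(1/(a - 2*k) + 1/a)*(1 - E2)) = (E2 - Eb2)/(2*(2*k - a)) := by
    have hne : 2*(2*k - a) ≠ 0 := by nlinarith
    have hne' : 2*k - a ≠ 0 := by intro h; linarith
    field_simp
    ring
  have hden : (0:ℝ) < 2*(2*k - a) := by linarith
  have hord : -(1/2)*(1/(a - 2*k) + 1/a)*(1 - E2)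
      ≤ (1/2)*((Eb2 - 1)/(a - 2*k) + (E2 - 1)/a) := by
    have : 0 ≤ (E2 - Eb2)/(2*(2*k - a)) := div_nonneg (by linarith) hden.le
    linarith
  have T2 : (Real.sqrt ((1/2)*((Eb2 - 1)/(a - 2*k) + (E2 - 1)/a))
      - Real.sqrt (-(1/2)*(1/(a - 2*k) + 1/a)*(1 - E2)))^2 * a^2 ≤ k := by
    have hsq := aux_sq_sqrt_sub hShat hord
    have hbd : (1/2)*((Eb2 - 1)/(a - 2*k) + (E2 - 1)/a)
        - (-(1/2)*(1/(a - 2*k) + 1/a)*(1 - E2)) ≤ k/a^2 := by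
      rw [hS, div_le_div_iff₀ hden ha2]
      nlinarith [hd2']
    have hsqnn : 0 ≤ (Real.sqrt ((1/2)*((Eb2 - 1)/(a - 2*k) + (E2 - 1)/a))
      - Real.sqrt (-(1/2)*(1/(a - 2*k) + 1/a)*(1 - E2)))^2 := sq_nonneg _
    have hka : k/a^2 * a^2 = k := by field_simp
    have m1 := mul_le_mul_of_nonneg_right hsq ha2.le
    have m2 := mul_le_mul_of_nonneg_right hbd ha2.le
    linarith [m1, m2, hka]
  -- combine
  have hrw : (K*(x₁-x₂)^2 + 1)/a^2*k = ((K*(x₁-x₂)^2 + 1)*k)/a^2 := by ring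
  rw [hrw, le_div_iff₀ ha2]
  linarith [T1, T2]
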